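/- Let (X, d) be a metric space, q > 2, L₀ > 0, and let φ : X → ℝ satisfy ‖φ‖_{log^q} < ∞. Then there exists a constant C > 0, depending only on L₀ and q, such that for every integer n ≥ 1, every real m > 0, and all points x₀, …, x_{n−1}, y₀, …, y_{n−1} ∈ X with d(x_l, y_l) ≤ e^{−m−(n−l)L₀} for all 0 ≤ l ≤ n−1, one has Σ_{l=0}^{n−1} |φ(x_l) − φ(y_l)| ≤ C · ‖φ‖_{log^q} · m^{−(q−1)}. -/

import Mathlib

open Real Finset

private lemma key_step (q L₀ : ℝ) (hq : 1 < q) (hL : 0 < L₀) (a : ℝ) (ha : 0 < a) :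
    (q - 1) * L₀ * (a + L₀) ^ (-q) ≤ a ^ (1 - q) - (a + L₀) ^ (1 - q) := by
  have hab : a < a + L₀ := by linarith
  have hcont : ContinuousOn (fun t : ℝ => t ^ (1 - q)) (Set.Icc a (a + L₀)) := by
    intro t ht
    exact (Real.continuousAt_rpow_const t (1 - q)
      (Or.inl (lt_of_lt_of_le ha ht.1).ne')).continuousWithinAt
  have hderiv : ∀ t ∈ Set.Ioo a (a + L₀),
      HasDerivAt (fun t : ℝ => t ^ (1 - q)) ((1 - q) * t ^ (-q)) t := by
    intro t ht
    have h := Real.hasDerivAt_rpow_const (x := t) (p := 1 - q)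
      (Or.inl (lt_trans ha ht.1).ne')
    simpa using h.congr_deriv (by ring_nf)
  obtain ⟨c, hc, hceq⟩ := exists_hasDerivAt_eq_slope (fun t : ℝ => t ^ (1 - q))
    (fun t => (1 - q) * t ^ (-q)) hab hcont hderiv
  have hc0 : 0 < c := lt_trans ha hc.1
  have hmono : (a + L₀) ^ (-q) ≤ c ^ (-q) :=
    Real.rpow_le_rpow_of_nonpos hc0 hc.2.le (by linarith)
  have hslope : (1 - q) * c ^ (-q) = ((a + L₀) ^ (1 - q) - a ^ (1 - q)) / L₀ := by
    simpa using hceq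
  have : a ^ (1 - q) - (a + L₀) ^ (1 - q) = (q - 1) * c ^ (-q) * L₀ := by
    field_simp at hslope
    nlinarith [hslope]
  rw [this]
  have hcq : (0:ℝ) ≤ c ^ (-q) := Real.rpow_nonneg hc0.le _
  have h := mul_le_mul_of_nonneg_left hmono (show (0:ℝ) ≤ (q - 1) * L₀ by nlinarith)
  nlinarith [h]

private lemma sum_bound (q L₀ : ℝ) (hq : 1 < q) (hL : 0 < L₀) (m : ℝ) (hm : 0 < m) :
    ∀ n : ℕ, ∑ k ∈ Finset.range n, (m + ((k : ℝ) + 1) * L₀) ^ (-q)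
      ≤ (m ^ (1 - q) - (m + (n : ℝ) * L₀) ^ (1 - q)) / ((q - 1) * L₀) := by
  intro n
  induction n with
  | zero => simp
  | succ n ih =>
    rw [Finset.sum_range_succ]
    have ha : (0:ℝ) < m + (n : ℝ) * L₀ := by positivity
    have hkey := key_step q L₀ hq hL (m + (n : ℝ) * L₀) ha
    have hpos : (0:ℝ) < (q - 1) * L₀ := by nlinarith
    have h2 : (m + ((n : ℝ) + 1) * L₀) ^ (-q)
        ≤ ((m + (n : ℝ) * L₀) ^ (1 - q) - (m + ((n : ℝ) + 1) * L₀) ^ (1 - q))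
            / ((q - 1) * L₀) := by
      rw [le_div_iff₀ hpos]
      have : m + ((n : ℝ) + 1) * L₀ = m + (n : ℝ) * L₀ + L₀ := by ring
      rw [this] at *
      nlinarith [hkey]
    push_cast
    calc _ ≤ (m ^ (1 - q) - (m + (n : ℝ) * L₀) ^ (1 - q)) / ((q - 1) * L₀)
          + ((m + (n : ℝ) * L₀) ^ (1 - q) - (m + ((n : ℝ) + 1) * L₀) ^ (1 - q))
            / ((q - 1) * L₀) := add_le_add ih h2
      _ = (m ^ (1 - q) - (m + ((n : ℝ) + 1) * L₀) ^ (1 - q)) / ((q - 1) * L₀) := by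
          rw [← add_div]
          congr 1
          ring

theorem stmt_8 (q L₀ : ℝ) (hq : 2 < q) (hL : 0 < L₀) :
    ∃ C : ℝ, 0 < C ∧
      ∀ (X : Type) (_ : MetricSpace X) (φ : X → ℝ) (K : ℝ), 0 ≤ K →
        (∀ a b : X, a ≠ b → |φ a - φ b| * (1 + |Real.log (dist a b)|) ^ q ≤ K) →
        ∀ n : ℕ, 1 ≤ n → ∀ m : ℝ, 0 < m → ∀ x y : ℕ → X,
          (∀ l : ℕ, l < n → dist (x l) (y l) ≤ Real.exp (-m - ((n : ℝ) - l) * L₀)) →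
          ∑ l ∈ Finset.range n, |φ (x l) - φ (y l)| ≤ C * K * m ^ (-(q - 1)) := by
  have hq1 : 1 < q := by linarith
  have hq1' : (0:ℝ) < q - 1 := by linarith
  have hpos : (0:ℝ) < 1 / ((q - 1) * L₀) := by positivity
  refine ⟨1 / ((q - 1) * L₀), hpos, ?_⟩
  intro X _ φ K hK hsem n hn m hm x y hd
  -- termwise bound
  have hterm : ∀ l : ℕ, l < n →
      |φ (x l) - φ (y l)| ≤ K * (m + ((n : ℝ) - l) * L₀) ^ (-q) := by
    intro l hl
    set s : ℝ := m + ((n : ℝ) - (l : ℝ)) * L₀ with hs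
    have hnl : (0:ℝ) < (n : ℝ) - l := by
      have : (l : ℝ) < n := by exact_mod_cast hl
      linarith
    have hs0 : 0 < s := by rw [hs]; positivity
    by_cases hxy : x l = y l
    · rw [hxy]
      simp only [sub_self, abs_zero]
      positivity
    · have hd' := hd l hl
      have hdpos : 0 < dist (x l) (y l) := dist_pos.mpr hxy
      have hlog : Real.log (dist (x l) (y l)) ≤ -s := by
        have := Real.log_le_log hdpos hd'
        rw [Real.log_exp] at this
        linarith [this]
      have habs : s ≤ 1 + |Real.log (dist (x l) (y l))| := by
        have h2 := neg_le_abs (Real.log (dist (x l) (y l)))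
        linarith
      have hK' := hsem (x l) (y l) hxy
      have hspow : s ^ q ≤ (1 + |Real.log (dist (x l) (y l))|) ^ q :=
        Real.rpow_le_rpow hs0.le habs (by linarith)
      have h3 : |φ (x l) - φ (y l)| * s ^ q ≤ K := by
        calc |φ (x l) - φ (y l)| * s ^ q
            ≤ |φ (x l) - φ (y l)| * (1 + |Real.log (dist (x l) (y l))|) ^ q :=
              mul_le_mul_of_nonneg_left hspow (abs_nonneg _)
          _ ≤ K := hK'
      have hsq : (0:ℝ) < s ^ q := Real.rpow_pos_of_pos hs0 q
      rw [Real.rpow_neg hs0.le, mul_comm K]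
      have h3' : |φ (x l) - φ (y l)| ≤ K / s ^ q := (le_div_iff₀ hsq).mpr h3
      rw [div_eq_inv_mul] at h3'
      exact h3'
  have hsum1 : ∑ l ∈ Finset.range n, |φ (x l) - φ (y l)|
      ≤ ∑ l ∈ Finset.range n, K * (m + ((n : ℝ) - l) * L₀) ^ (-q) :=
    Finset.sum_le_sum fun l hl => hterm l (Finset.mem_range.mp hl)
  -- reindex
  have hreflect : ∑ l ∈ Finset.range n, K * (m + ((n : ℝ) - l) * L₀) ^ (-q)
      = K * ∑ k ∈ Finset.range n, (m + ((k : ℝ) + 1) * L₀) ^ (-q) := by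
    rw [Finset.mul_sum]
    rw [← Finset.sum_range_reflect (fun k => K * (m + ((k : ℝ) + 1) * L₀) ^ (-q)) n]
    refine Finset.sum_congr rfl fun l hl => ?_
    have hl' := Finset.mem_range.mp hl
    congr 2
    have : ((n - 1 - l : ℕ) : ℝ) = (n : ℝ) - 1 - l := by
      have h1 : l ≤ n - 1 := by omega
      push_cast [Nat.cast_sub h1, Nat.cast_sub (by omega : 1 ≤ n)]
      ring
    rw [this]; ring
  have hsum2 := sum_bound q L₀ hq1 hL m hm n
  have hpos2 : (0:ℝ) < (q - 1) * L₀ := by nlinarith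
  have hnn : (0:ℝ) ≤ (m + (n : ℝ) * L₀) ^ (1 - q) := Real.rpow_nonneg (by positivity) _
  calc ∑ l ∈ Finset.range n, |φ (x l) - φ (y l)|
      ≤ K * ∑ k ∈ Finset.range n, (m + ((k : ℝ) + 1) * L₀) ^ (-q) := by
        rw [← hreflect]; exact hsum1
    _ ≤ K * ((m ^ (1 - q) - (m + (n : ℝ) * L₀) ^ (1 - q)) / ((q - 1) * L₀)) :=
        mul_le_mul_of_nonneg_left hsum2 hK
    _ ≤ K * (m ^ (1 - q) / ((q - 1) * L₀)) := by
        gcongr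
        linarith
    _ = 1 / ((q - 1) * L₀) * K * m ^ (-(q - 1)) := by
        rw [show -(q-1) = 1 - q by ring]; ring
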